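/- arXiv:2310.18759 — 3 statements merged into one kernel-verified Lean document; each statement's English description precedes it below -/
import Mathlib

section
/- Let 𝒪(−1)² → 𝒪² be an injective map of sheaves on P¹ whose cokernel is 𝒪_x ⊕ 𝒪_{x′} or supported at one point of length 2. Then the embedding 𝒪(−1)² → 𝒪² factors through a subsheaf of the form 𝒪(−1) ⊕ 𝒪 ⊂ 𝒪² (the kernel of a surjection 𝒪² → 𝒪_x for some point x in the support of the cokernel). -/
/-!
STATEMENT 11: Any injective map of sheaves `𝒪(-1)² → 𝒪²` on `P¹` (whose cokernel
is then automatically of length 2: either `𝒪_x ⊕ 𝒪_{x'}` or supported at one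
point) factors through a subsheaf of the form `𝒪(-1) ⊕ 𝒪 ⊂ 𝒪²` (the kernel of a
surjection `𝒪² → 𝒪_x` for `x` in the support of the cokernel).

Translation into matrices of homogeneous forms on `P¹` (coordinate ring
`k[x,y] = MvPolynomial (Fin 2) k`):
* a map `𝒪(-1)² → 𝒪²` is a `2×2` matrix `M` of homogeneous linear forms;
  it is injective with length-2 cokernel iff `det M ≠ 0` (`det M` is then a
  nonzero quadric, whose zeros are the support of the cokernel);
* a map `𝒪(-1) ⊕ 𝒪 → 𝒪²` is a matrix `S` whose first column consists of linear
  forms and second column of constants; it embeds `𝒪(-1) ⊕ 𝒪` as the kernel of a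
  surjection `𝒪² → 𝒪_x` iff `det S ≠ 0` (a nonzero linear form vanishing at `x`);
* a map `𝒪(-1)² → 𝒪(-1) ⊕ 𝒪` is a matrix `T` whose first row consists of
  constants and second row of linear forms.
The conclusion is the factorization `M = S * T`, together with `det S ∣ det M`
(so the modification point `x` lies in the support of the cokernel).
-/

open MvPolynomial

lemma deg1 {k : Type*} [Field k] {f : MvPolynomial (Fin 2) k} (hf : f.IsHomogeneous 1) :
    ∃ a b : k, f = C a * X 0 + C b * X 1 := by
  refine ⟨coeff (Finsupp.single 0 1) f, coeff (Finsupp.single 1 1) f, ?_⟩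
  ext m
  have hdeg : m.degree = m 0 + m 1 := by
    show (∑ i ∈ m.support, m i) = m 0 + m 1
    rw [Finset.sum_subset (Finset.subset_univ m.support)
      (by intro i _ h; simpa using Finsupp.notMem_support_iff.mp h), Fin.sum_univ_two]
  rcases eq_or_ne m.degree 1 with h1 | h1
  · rw [hdeg] at h1
    rcases Nat.add_eq_one_iff.mp h1 with ⟨h0, h1'⟩ | ⟨h0, h1'⟩
    · have hm : m = Finsupp.single 1 1 := by
        ext i; fin_cases i <;> simp [h0, h1']
      simp [hm, coeff_add, coeff_C_mul, coeff_X, coeff_single_X, Finsupp.single_eq_single_iff]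
    · have hm : m = Finsupp.single 0 1 := by
        ext i; fin_cases i <;> simp [h0, h1']
      simp [hm, coeff_add, coeff_C_mul, coeff_X, coeff_single_X, Finsupp.single_eq_single_iff]
  · rw [hf.coeff_eq_zero h1]
    rw [hdeg] at h1
    simp only [coeff_add, coeff_C_mul, coeff_X']
    rw [if_neg, if_neg]
    · ring
    · rintro rfl; simp at h1
    · rintro rfl; simp at h1

lemma root2 {k : Type*} [Field k] [IsAlgClosed k] (e f g : k) :
    ∃ s t : k, ¬(s = 0 ∧ t = 0) ∧ e*(s*s) + f*(s*t) + g*(t*t) = 0 := by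
  rcases eq_or_ne e 0 with rfl | he
  · exact ⟨1, 0, by simp, by ring⟩
  · obtain ⟨z, hz⟩ := IsAlgClosed.exists_root
      (Polynomial.C e * Polynomial.X^2 + Polynomial.C f * Polynomial.X + Polynomial.C g)
      (by rw [Polynomial.degree_quadratic he]; exact two_ne_zero)
    refine ⟨z, 1, by simp, ?_⟩
    have := hz
    rw [Polynomial.IsRoot, Polynomial.eval_add, Polynomial.eval_add, Polynomial.eval_mul,
      Polynomial.eval_mul, Polynomial.eval_pow, Polynomial.eval_C, Polynomial.eval_C,
      Polynomial.eval_X] at this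
    simp only [Polynomial.eval_C] at this; linear_combination this

lemma kervec {k : Type*} [Field k] (c00 c01 c10 c11 : k)
    (h : c00 * c11 = c01 * c10) :
    ∃ w0 w1 : k, ¬(w0 = 0 ∧ w1 = 0) ∧ c00*w0 + c01*w1 = 0 ∧ c10*w0 + c11*w1 = 0 := by
  by_cases h0 : c00 = 0 ∧ c01 = 0
  · by_cases h1 : c10 = 0 ∧ c11 = 0
    · exact ⟨1, 0, by simp, by simp [h0.1], by simp [h1.1]⟩
    · refine ⟨-c11, c10, ?_, by rw [h0.1, h0.2]; ring, by ring⟩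
      rintro ⟨hw0, hw1⟩
      exact h1 ⟨hw1, by simpa [neg_eq_zero] using hw0⟩
  · refine ⟨-c01, c00, ?_, by ring, by linear_combination h⟩
    rintro ⟨hw0, hw1⟩
    exact h0 ⟨hw1, by simpa [neg_eq_zero] using hw0⟩

set_option maxHeartbeats 1000000 in
theorem stmt11 (k : Type*) [Field k] [IsAlgClosed k]
    (M : Matrix (Fin 2) (Fin 2) (MvPolynomial (Fin 2) k))
    (hhom : ∀ i j, (M i j).IsHomogeneous 1)
    (hdet : M.det ≠ 0) :
    ∃ S T : Matrix (Fin 2) (Fin 2) (MvPolynomial (Fin 2) k),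
      (∀ i, (S i 0).IsHomogeneous 1) ∧ (∀ i, (S i 1).IsHomogeneous 0) ∧
      S.det ≠ 0 ∧
      (∀ j, (T 0 j).IsHomogeneous 0) ∧ (∀ j, (T 1 j).IsHomogeneous 1) ∧
      M = S * T ∧ S.det ∣ M.det := by
  classical
  choose A B hM using fun i j => deg1 (hhom i j)
  -- determinant quadric
  have hDM : M.det = C (A 0 0 * A 1 1 - A 0 1 * A 1 0) * (X 0 * X 0)
      + C (A 0 0 * B 1 1 + B 0 0 * A 1 1 - A 0 1 * B 1 0 - B 0 1 * A 1 0) * (X 0 * X 1)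
      + C (B 0 0 * B 1 1 - B 0 1 * B 1 0) * (X 1 * X 1) := by
    rw [Matrix.det_fin_two, hM 0 0, hM 0 1, hM 1 0, hM 1 1]
    simp only [map_sub, map_add, map_mul]
    ring
  -- root of the quadric
  obtain ⟨s, t, hst, hroot⟩ := root2 (A 0 0 * A 1 1 - A 0 1 * A 1 0)
    (A 0 0 * B 1 1 + B 0 0 * A 1 1 - A 0 1 * B 1 0 - B 0 1 * A 1 0)
    (B 0 0 * B 1 1 - B 0 1 * B 1 0)
  -- kernel vector of M(s,t)
  obtain ⟨w0, w1, hw, hker0, hker1⟩ := kervec (A 0 0 * s + B 0 0 * t) (A 0 1 * s + B 0 1 * t)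
    (A 1 0 * s + B 1 0 * t) (A 1 1 * s + B 1 1 * t) (by linear_combination hroot)
  -- the constant vector c with M·w = ℓ·c
  obtain ⟨c0, c1, hac0, hac1, hbc0, hbc1⟩ :
      ∃ c0 c1 : k, t * c0 = A 0 0 * w0 + A 0 1 * w1 ∧ t * c1 = A 1 0 * w0 + A 1 1 * w1 ∧
        s * c0 = -(B 0 0 * w0 + B 0 1 * w1) ∧ s * c1 = -(B 1 0 * w0 + B 1 1 * w1) := by
    rcases eq_or_ne t 0 with rfl | ht
    · have hs : s ≠ 0 := fun h => hst ⟨h, rfl⟩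
      have h0 : A 0 0 * w0 + A 0 1 * w1 = 0 := by
        apply mul_left_cancel₀ hs; linear_combination hker0
      have h1 : A 1 0 * w0 + A 1 1 * w1 = 0 := by
        apply mul_left_cancel₀ hs; linear_combination hker1
      exact ⟨-(B 0 0 * w0 + B 0 1 * w1)/s, -(B 1 0 * w0 + B 1 1 * w1)/s,
        by rw [zero_mul, h0], by rw [zero_mul, h1],
        by field_simp, by field_simp⟩
    · refine ⟨(A 0 0 * w0 + A 0 1 * w1)/t, (A 1 0 * w0 + A 1 1 * w1)/t,
        by field_simp, by field_simp, ?_, ?_⟩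
      · field_simp
        linear_combination hker0
      · field_simp
        linear_combination hker1
  -- c is nonzero
  have hc : ¬(c0 = 0 ∧ c1 = 0) := by
    rintro ⟨hc0, hc1⟩
    have ha0 : A 0 0 * w0 + A 0 1 * w1 = 0 := by rw [← hac0, hc0, mul_zero]
    have ha1 : A 1 0 * w0 + A 1 1 * w1 = 0 := by rw [← hac1, hc1, mul_zero]
    have hb0 : B 0 0 * w0 + B 0 1 * w1 = 0 := by
      have := hbc0; rw [hc0, mul_zero] at this; linear_combination this
    have hb1 : B 1 0 * w0 + B 1 1 * w1 = 0 := by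
      have := hbc1; rw [hc1, mul_zero] at this; linear_combination this
    have hefg : (A 0 0 * A 1 1 - A 0 1 * A 1 0) = 0 ∧
        (A 0 0 * B 1 1 + B 0 0 * A 1 1 - A 0 1 * B 1 0 - B 0 1 * A 1 0) = 0 ∧
        (B 0 0 * B 1 1 - B 0 1 * B 1 0) = 0 := by
      rcases eq_or_ne w0 0 with hw0 | hw0
      · have hw1 : w1 ≠ 0 := fun h => hw ⟨hw0, h⟩
        refine ⟨mul_right_cancel₀ hw1 ?_, mul_right_cancel₀ hw1 ?_, mul_right_cancel₀ hw1 ?_⟩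
        · linear_combination (-(A 1 0)) * ha0 + A 0 0 * ha1
        · linear_combination (-(B 1 0)) * ha0 + B 0 0 * ha1 - A 1 0 * hb0 + A 0 0 * hb1
        · linear_combination (-(B 1 0)) * hb0 + B 0 0 * hb1
      · refine ⟨mul_right_cancel₀ hw0 ?_, mul_right_cancel₀ hw0 ?_, mul_right_cancel₀ hw0 ?_⟩
        · linear_combination A 1 1 * ha0 - A 0 1 * ha1
        · linear_combination B 1 1 * ha0 - B 0 1 * ha1 + A 1 1 * hb0 - A 0 1 * hb1
        · linear_combination B 1 1 * hb0 - B 0 1 * hb1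
    exact hdet (by rw [hDM, hefg.1, hefg.2.1, hefg.2.2]; simp)
  -- complete c to a basis (c,d)
  obtain ⟨d0, d1, hr⟩ : ∃ d0 d1 : k, c0 * d1 - c1 * d0 ≠ 0 := by
    rcases eq_or_ne c0 0 with hc0 | hc0
    · exact ⟨1, 0, by simpa [hc0] using fun h => hc ⟨hc0, h⟩⟩
    · exact ⟨0, 1, by simpa using hc0⟩
  -- complete w to a basis (w,v)
  obtain ⟨v0, v1, hu⟩ : ∃ v0 v1 : k, w0 * v1 - w1 * v0 ≠ 0 := by
    rcases eq_or_ne w0 0 with hw0 | hw0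
    · exact ⟨1, 0, by simpa [hw0] using fun h => hw ⟨hw0, h⟩⟩
    · exact ⟨0, 1, by simpa using hw0⟩
  -- decompose A·v and B·v in the basis (c,d)
  obtain ⟨al, be, hal0, hal1⟩ : ∃ al be : k,
      al * c0 + be * d0 = A 0 0 * v0 + A 0 1 * v1 ∧ al * c1 + be * d1 = A 1 0 * v0 + A 1 1 * v1 := by
    refine ⟨((A 0 0 * v0 + A 0 1 * v1) * d1 - (A 1 0 * v0 + A 1 1 * v1) * d0) / (c0 * d1 - c1 * d0),
      (c0 * (A 1 0 * v0 + A 1 1 * v1) - c1 * (A 0 0 * v0 + A 0 1 * v1)) / (c0 * d1 - c1 * d0), ?_, ?_⟩ <;>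
    · rw [div_mul_eq_mul_div, div_mul_eq_mul_div, ← add_div, div_eq_iff hr]
      ring
  obtain ⟨ga, de, hga0, hga1⟩ : ∃ ga de : k,
      ga * c0 + de * d0 = B 0 0 * v0 + B 0 1 * v1 ∧ ga * c1 + de * d1 = B 1 0 * v0 + B 1 1 * v1 := by
    refine ⟨((B 0 0 * v0 + B 0 1 * v1) * d1 - (B 1 0 * v0 + B 1 1 * v1) * d0) / (c0 * d1 - c1 * d0),
      (c0 * (B 1 0 * v0 + B 1 1 * v1) - c1 * (B 0 0 * v0 + B 0 1 * v1)) / (c0 * d1 - c1 * d0), ?_, ?_⟩ <;>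
    · rw [div_mul_eq_mul_div, div_mul_eq_mul_div, ← add_div, div_eq_iff hr]
      ring
  have lift : ∀ {x y : k}, x = y → (C x : MvPolynomial (Fin 2) k) = C y := fun h => congrArg _ h
  have Hac0 : (C t : MvPolynomial (Fin 2) k) * C c0 = C (A 0 0) * C w0 + C (A 0 1) * C w1 := by
    simpa only [map_mul, map_add] using lift hac0
  have Hac1 : (C t : MvPolynomial (Fin 2) k) * C c1 = C (A 1 0) * C w0 + C (A 1 1) * C w1 := by
    simpa only [map_mul, map_add] using lift hac1
  have Hbc0 : (C s : MvPolynomial (Fin 2) k) * C c0 = -(C (B 0 0) * C w0 + C (B 0 1) * C w1) := by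
    simpa only [map_mul, map_add, map_neg] using lift hbc0
  have Hbc1 : (C s : MvPolynomial (Fin 2) k) * C c1 = -(C (B 1 0) * C w0 + C (B 1 1) * C w1) := by
    simpa only [map_mul, map_add, map_neg] using lift hbc1
  have Hal0 : (C al : MvPolynomial (Fin 2) k) * C c0 + C be * C d0 = C (A 0 0) * C v0 + C (A 0 1) * C v1 := by
    simpa only [map_mul, map_add] using lift hal0
  have Hal1 : (C al : MvPolynomial (Fin 2) k) * C c1 + C be * C d1 = C (A 1 0) * C v0 + C (A 1 1) * C v1 := by
    simpa only [map_mul, map_add] using lift hal1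
  have Hga0 : (C ga : MvPolynomial (Fin 2) k) * C c0 + C de * C d0 = C (B 0 0) * C v0 + C (B 0 1) * C v1 := by
    simpa only [map_mul, map_add] using lift hga0
  have Hga1 : (C ga : MvPolynomial (Fin 2) k) * C c1 + C de * C d1 = C (B 1 0) * C v0 + C (B 1 1) * C v1 := by
    simpa only [map_mul, map_add] using lift hga1
  -- W * Wi = 1
  have hWWi : (!![C w0, C v0; C w1, C v1] : Matrix (Fin 2) (Fin 2) (MvPolynomial (Fin 2) k)) * !![C (v1/(w0 * v1 - w1 * v0)), C (-(v0/(w0 * v1 - w1 * v0))); C (-(w1/(w0 * v1 - w1 * v0))), C (w0/(w0 * v1 - w1 * v0))] = 1 := by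
    rw [Matrix.mul_fin_two, Matrix.one_fin_two]
    refine Matrix.ext fun i j => ?_
    fin_cases i <;> fin_cases j <;> simp only [Matrix.of_apply, Matrix.cons_val', Matrix.cons_val_zero, Matrix.cons_val_one, Matrix.head_cons,
        Matrix.empty_val', Matrix.cons_val_fin_one, Matrix.head_fin_const, Fin.zero_eta, Fin.mk_one,
        Fin.isValue]
    · rw [← map_mul, ← map_mul, ← map_add, ← map_one (C : k →+* MvPolynomial (Fin 2) k)]
      exact lift (by field_simp; ring)
    · rw [← map_mul, ← map_mul, ← map_add, ← map_zero (C : k →+* MvPolynomial (Fin 2) k)]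
      exact lift (by field_simp; ring)
    · rw [← map_mul, ← map_mul, ← map_add, ← map_zero (C : k →+* MvPolynomial (Fin 2) k)]
      exact lift (by field_simp; ring)
    · rw [← map_mul, ← map_mul, ← map_add, ← map_one (C : k →+* MvPolynomial (Fin 2) k)]
      exact lift (by field_simp; ring)
  -- M * W = S * T0
  have hMW : M * !![C w0, C v0; C w1, C v1] = !![(C be * X 0 + C de * X 1) * C d0, C c0; (C be * X 0 + C de * X 1) * C d1, C c1] * !![(0 : MvPolynomial (Fin 2) k), 1; (C t * X 0 - C s * X 1), (C al * X 0 + C ga * X 1)] := by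
    rw [Matrix.eta_fin_two M, Matrix.mul_fin_two, Matrix.mul_fin_two]
    refine Matrix.ext fun i j => ?_
    fin_cases i <;> fin_cases j <;> simp only [Matrix.of_apply, Matrix.cons_val', Matrix.cons_val_zero, Matrix.cons_val_one, Matrix.head_cons,
        Matrix.empty_val', Matrix.cons_val_fin_one, Matrix.head_fin_const, Fin.zero_eta, Fin.mk_one,
        Fin.isValue]
    · rw [hM 0 0, hM 0 1]
      linear_combination (-(X 0) : MvPolynomial (Fin 2) k) * Hac0 + (X 1 : MvPolynomial (Fin 2) k) * Hbc0
    · rw [hM 0 0, hM 0 1]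
      linear_combination (-(X 0) : MvPolynomial (Fin 2) k) * Hal0 - (X 1 : MvPolynomial (Fin 2) k) * Hga0
    · rw [hM 1 0, hM 1 1]
      linear_combination (-(X 0) : MvPolynomial (Fin 2) k) * Hac1 + (X 1 : MvPolynomial (Fin 2) k) * Hbc1
    · rw [hM 1 0, hM 1 1]
      linear_combination (-(X 0) : MvPolynomial (Fin 2) k) * Hal1 - (X 1 : MvPolynomial (Fin 2) k) * Hga1
  -- T0 * Wi = Texp
  have hT : (!![(0 : MvPolynomial (Fin 2) k), 1; (C t * X 0 - C s * X 1), (C al * X 0 + C ga * X 1)] : Matrix (Fin 2) (Fin 2) (MvPolynomial (Fin 2) k)) * !![C (v1/(w0 * v1 - w1 * v0)), C (-(v0/(w0 * v1 - w1 * v0))); C (-(w1/(w0 * v1 - w1 * v0))), C (w0/(w0 * v1 - w1 * v0))] = !![C (-(w1/(w0 * v1 - w1 * v0))), C (w0/(w0 * v1 - w1 * v0)); (C t * X 0 - C s * X 1) * C (v1/(w0 * v1 - w1 * v0)) + (C al * X 0 + C ga * X 1) * C (-(w1/(w0 * v1 - w1 * v0))), (C t * X 0 - C s * X 1) * C (-(v0/(w0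 * v1 - w1 * v0))) + (C al * X 0 + C ga * X 1) * C (w0/(w0 * v1 - w1 * v0))] := by
    rw [Matrix.mul_fin_two]
    refine Matrix.ext fun i j => ?_
    fin_cases i <;> fin_cases j <;> simp only [Matrix.of_apply, Matrix.cons_val', Matrix.cons_val_zero, Matrix.cons_val_one, Matrix.head_cons,
        Matrix.empty_val', Matrix.cons_val_fin_one, Matrix.head_fin_const, Fin.zero_eta, Fin.mk_one,
        Fin.isValue] <;> ring
  have key : M = !![(C be * X 0 + C de * X 1) * C d0, C c0; (C be * X 0 + C de * X 1) * C d1, C c1] * !![C (-(w1/(w0 * v1 - w1 * v0))), C (w0/(w0 * v1 - w1 * v0)); (C t * X 0 - C s * X 1) * C (v1/(w0 * v1 - w1 * v0)) + (C al * X 0 + C ga * X 1) * C (-(w1/(w0 * v1 - w1 * v0))), (C t * X 0 - C s * X 1) * C (-(v0/(w0 * v1 - w1 * v0))) + (C al * X 0 + C ga * X 1) * C (w0/(w0 * v1 - w1 * v0))] := by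
    calc M = M * (!![C w0, C v0; C w1, C v1] * !![C (v1/(w0 * v1 - w1 * v0)), C (-(v0/(w0 * v1 - w1 * v0))); C (-(w1/(w0 * v1 - w1 * v0))), C (w0/(w0 * v1 - w1 * v0))]) := by rw [hWWi, Matrix.mul_one]
    _ = (M * !![C w0, C v0; C w1, C v1]) * !![C (v1/(w0 * v1 - w1 * v0)), C (-(v0/(w0 * v1 - w1 * v0))); C (-(w1/(w0 * v1 - w1 * v0))), C (w0/(w0 * v1 - w1 * v0))] := by rw [Matrix.mul_assoc]
    _ = (!![(C be * X 0 + C de * X 1) * C d0, C c0; (C be * X 0 + C de * X 1) * C d1, C c1] * !![(0 : MvPolynomial (Fin 2) k), 1; (C t * X 0 - C s * X 1), (C al * X 0 + C ga * X 1)]) * !![C (v1/(w0 * v1 - w1 * v0)), C (-(v0/(w0 * v1 - w1 * v0))); C (-(w1/(w0 * v1 - w1 * v0))), C (w0/(w0 * v1 - w1 * v0))] := by rw [hMW]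
    _ = !![(C be * X 0 + C de * X 1) * C d0, C c0; (C be * X 0 + C de * X 1) * C d1, C c1] * (!![(0 : MvPolynomial (Fin 2) k), 1; (C t * X 0 - C s * X 1), (C al * X 0 + C ga * X 1)] * !![C (v1/(w0 * v1 - w1 * v0)), C (-(v0/(w0 * v1 - w1 * v0))); C (-(w1/(w0 * v1 - w1 * v0))), C (w0/(w0 * v1 - w1 * v0))]) := by rw [Matrix.mul_assoc]
    _ = !![(C be * X 0 + C de * X 1) * C d0, C c0; (C be * X 0 + C de * X 1) * C d1, C c1] * !![C (-(w1/(w0 * v1 - w1 * v0))), C (w0/(w0 * v1 - w1 * v0)); (C t * X 0 - C s * X 1) * C (v1/(w0 * v1 - w1 * v0)) + (C al * X 0 + C ga * X 1) * C (-(w1/(w0 * v1 - w1 * v0))), (C t * X 0 - C s * X 1) * C (-(v0/(w0 * v1 - w1 * v0))) + (C al * X 0 + C ga * X 1) * C (w0/(w0 * v1 - w1 * v0))] := by rw [hT]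
  have hdet2 : M.det = (!![(C be * X 0 + C de * X 1) * C d0, C c0; (C be * X 0 + C de * X 1) * C d1, C c1] : Matrix (Fin 2) (Fin 2) (MvPolynomial (Fin 2) k)).det * (!![C (-(w1/(w0 * v1 - w1 * v0))), C (w0/(w0 * v1 - w1 * v0)); (C t * X 0 - C s * X 1) * C (v1/(w0 * v1 - w1 * v0)) + (C al * X 0 + C ga * X 1) * C (-(w1/(w0 * v1 - w1 * v0))), (C t * X 0 - C s * X 1) * C (-(v0/(w0 * v1 - w1 * v0))) + (C al * X 0 + C ga * X 1) * C (w0/(w0 * v1 - w1 * v0))]).det := by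
    rw [key, Matrix.det_mul]
  refine ⟨!![(C be * X 0 + C de * X 1) * C d0, C c0; (C be * X 0 + C de * X 1) * C d1, C c1], !![C (-(w1/(w0 * v1 - w1 * v0))), C (w0/(w0 * v1 - w1 * v0)); (C t * X 0 - C s * X 1) * C (v1/(w0 * v1 - w1 * v0)) + (C al * X 0 + C ga * X 1) * C (-(w1/(w0 * v1 - w1 * v0))), (C t * X 0 - C s * X 1) * C (-(v0/(w0 * v1 - w1 * v0))) + (C al * X 0 + C ga * X 1) * C (w0/(w0 * v1 - w1 * v0))], ?_, ?_, ?_, ?_, ?_, key, ⟨_, hdet2⟩⟩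
  · intro i
    fin_cases i <;> simp only [Matrix.of_apply, Matrix.cons_val', Matrix.cons_val_zero, Matrix.cons_val_one, Matrix.head_cons,
        Matrix.empty_val', Matrix.cons_val_fin_one, Matrix.head_fin_const, Fin.zero_eta, Fin.mk_one,
        Fin.isValue] <;>
      exact (((isHomogeneous_C _ _).mul (isHomogeneous_X _ _)).add
        ((isHomogeneous_C _ _).mul (isHomogeneous_X _ _))).mul (isHomogeneous_C _ _)
  · intro i
    fin_cases i <;> simp only [Matrix.of_apply, Matrix.cons_val', Matrix.cons_val_zero, Matrix.cons_val_one, Matrix.head_cons,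
        Matrix.empty_val', Matrix.cons_val_fin_one, Matrix.head_fin_const, Fin.zero_eta, Fin.mk_one,
        Fin.isValue] <;> exact isHomogeneous_C _ _
  · intro h
    exact hdet (by rw [hdet2, h, zero_mul])
  · intro j
    fin_cases j <;> simp only [Matrix.of_apply, Matrix.cons_val', Matrix.cons_val_zero, Matrix.cons_val_one, Matrix.head_cons,
        Matrix.empty_val', Matrix.cons_val_fin_one, Matrix.head_fin_const, Fin.zero_eta, Fin.mk_one,
        Fin.isValue] <;> exact isHomogeneous_C _ _
  · intro j
    fin_cases j <;> simp only [Matrix.of_apply, Matrix.cons_val', Matrix.cons_val_zero, Matrix.cons_val_one, Matrix.head_cons,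
        Matrix.empty_val', Matrix.cons_val_fin_one, Matrix.head_fin_const, Fin.zero_eta, Fin.mk_one,
        Fin.isValue] <;>
      exact ((((isHomogeneous_C _ _).mul (isHomogeneous_X _ _)).sub
          ((isHomogeneous_C _ _).mul (isHomogeneous_X _ _))).mul (isHomogeneous_C _ _)).add
        ((((isHomogeneous_C _ _).mul (isHomogeneous_X _ _)).add
          ((isHomogeneous_C _ _).mul (isHomogeneous_X _ _))).mul (isHomogeneous_C _ _))
end

section
/- Let 𝔤 be the 4-dimensional Lie algebra over a field of characteristic 0 with basis (h₁, h₂, e₁, e₂) and brackets [h₁,h₂] = [e₁,e₂] = 0, [h_i, e_i] = 2e_i, and [h_j, e_i] = −e_i for i ≠ j. Suppose Π′ is a bivector field on a neighborhood of 0 in 𝔤* (coordinates h₁,h₂,e₁,e₂) such that the Schouten bracket [Π^lin, Π′] = 0, where Π^lin = 2e₁ ∂_{h₁}∧∂_{e₁} − e₁ ∂_{h₂}∧∂_{e₁} + 2e₂ ∂_{h₂}∧∂_{e₂} − e₂ ∂_{h₁}∧∂_{e₂}. Then the value of Π′ at the origin lies in the span of (2∂_{h₁}−∂_{h₂})∧∂_{e₁},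 (2∂_{h₂}−∂_{h₁})∧∂_{e₂}, and ∂_{h₁}∧∂_{h₂}. -/
/-!
STATEMENT 15: Let `𝔤` be the 4-dimensional Lie algebra with basis `(h₁,h₂,e₁,e₂)`
and brackets `[h₁,h₂]=[e₁,e₂]=0`, `[hᵢ,eᵢ]=2eᵢ`, `[hⱼ,eᵢ]=-eᵢ` (`i≠j`).  If `Π'`
is a bivector field (with polynomial coefficients) on `𝔤*` with `[Π^lin, Π'] = 0`
(Schouten bracket), where
`Π^lin = 2e₁ ∂_{h₁}∧∂_{e₁} - e₁ ∂_{h₂}∧∂_{e₁} + 2e₂ ∂_{h₂}∧∂_{e₂} - e₂ ∂_{h₁}∧∂_{e₂}`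
is the Lie–Poisson bivector of `𝔤`, then the value of `Π'` at the origin lies in
the span of `(2∂_{h₁}-∂_{h₂})∧∂_{e₁}`, `(2∂_{h₂}-∂_{h₁})∧∂_{e₂}` and `∂_{h₁}∧∂_{h₂}`.

Coordinates on `𝔤*`: index `0 ↔ h₁`, `1 ↔ h₂`, `2 ↔ e₁`, `3 ↔ e₂`.  A bivector
field is an antisymmetric matrix `P : Fin 4 → Fin 4 → MvPolynomial (Fin 4) k` of
components `P^{ab}`, and the Schouten bracket of two bivector fields has
components
`[P,Q]^{abc} = Σ_d (P^{da}∂_d Q^{bc} + P^{db}∂_d Q^{ca} + P^{dc}∂_d Q^{ab}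
             + Q^{da}∂_d P^{bc} + Q^{db}∂_d P^{ca} + Q^{dc}∂_d P^{ab})`.
-/

open MvPolynomial

noncomputable section

variable (k : Type*) [Field k] [CharZero k]

/-- Components of the Schouten bracket of two bivector fields on `k⁴` with
polynomial coefficients. -/
def schouten (P Q : Fin 4 → Fin 4 → MvPolynomial (Fin 4) k) :
    Fin 4 → Fin 4 → Fin 4 → MvPolynomial (Fin 4) k :=
  fun a b c => ∑ d : Fin 4,
    (P d a * pderiv d (Q b c) + P d b * pderiv d (Q c a) + P d c * pderiv d (Q a b)
      + Q d a * pderiv d (P b c) + Q d b * pderiv d (P c a) + Q d c * pderiv d (P a b))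

/-- The Lie–Poisson bivector `Π^lin` of `𝔤` (coordinates `h₁,h₂,e₁,e₂` =
`X 0, X 1, X 2, X 3`). -/
def PiLin : Fin 4 → Fin 4 → MvPolynomial (Fin 4) k :=
  !![0, 0, 2 * X 2, -(X 3);
     0, 0, -(X 2), 2 * X 3;
     -(2 * X 2), X 2, 0, 0;
     X 3, -(2 * X 3), 0, 0]

/-- `(2∂_{h₁}-∂_{h₂})∧∂_{e₁}` -/
def B1 : Fin 4 → Fin 4 → k := !![0, 0, 2, 0; 0, 0, -1, 0; -2, 1, 0, 0; 0, 0, 0, 0]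
/-- `(2∂_{h₂}-∂_{h₁})∧∂_{e₂}` -/
def B2 : Fin 4 → Fin 4 → k := !![0, 0, 0, -1; 0, 0, 0, 2; 0, 0, 0, 0; 1, -2, 0, 0]
/-- `∂_{h₁}∧∂_{h₂}` -/
def B3 : Fin 4 → Fin 4 → k := !![0, 1, 0, 0; -1, 0, 0, 0; 0, 0, 0, 0; 0, 0, 0, 0]

theorem stmt15 (P' : Fin 4 → Fin 4 → MvPolynomial (Fin 4) k)
    (hskew : ∀ a b, P' a b = - P' b a)
    (hcomm : ∀ a b c, schouten k (PiLin k) P' a b c = 0) :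
    ∃ c₁ c₂ c₃ : k, ∀ a b,
      MvPolynomial.eval (0 : Fin 4 → k) (P' a b)
        = c₁ * B1 k a b + c₂ * B2 k a b + c₃ * B3 k a b := by
  have key : ∀ a b c, MvPolynomial.eval (0 : Fin 4 → k) (schouten k (PiLin k) P' a b c) = 0 := by
    intro a b c; rw [hcomm]; simp
  have h1 := key 0 1 2
  have h2 := key 0 1 3
  have h3 := key 0 2 3
  simp [schouten, PiLin, Fin.sum_univ_four, Matrix.vecHead, Matrix.vecTail, map_ofNat] at h1 h2 h3
  refine ⟨MvPolynomial.eval (0 : Fin 4 → k) (P' 0 2) / 2,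
          MvPolynomial.eval (0 : Fin 4 → k) (P' 1 3) / 2,
          MvPolynomial.eval (0 : Fin 4 → k) (P' 0 1), ?_⟩
  intro a b
  have hs : ∀ a b : Fin 4, MvPolynomial.constantCoeff (P' a b)
      = - MvPolynomial.constantCoeff (P' b a) := by
    intro a b; rw [hskew]; simp
  fin_cases a <;> fin_cases b <;>
    simp [B1, B2, B3, MvPolynomial.eval_zero, Matrix.vecHead, Matrix.vecTail]
  · linear_combination (hs 0 0) / 2
  · linear_combination -h2 / 2 + hs 3 0 + (hs 3 1) / 2
  · linear_combination hs 1 0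
  · linear_combination (hs 1 1) / 2
  · linear_combination h1 / 2 + (hs 2 0) / 2 + hs 2 1
  · linear_combination hs 2 0
  · linear_combination -h1 / 2 - (hs 2 0) / 2
  · linear_combination (hs 2 2) / 2
  · linear_combination h3 - hs 3 2
  · linear_combination h2 / 2 - (hs 3 1) / 2
  · linear_combination hs 3 1
  · linear_combination 2 * hs 3 2 - h3
  · linear_combination (hs 3 3) / 2

end
end

section
/- Let X be a smooth projective variety of dimension n, N a rank n−1 vector bundle with det(N)^{−1} ≅ ω_X, F ∈ H⁰(X,N) a regular section with smooth zero locus C, and P a vector bundle on X with End(P) = k (P is simple) satisfying Ext^i(P, Λ^i N^∨ ⊗ P) = Ext^{i−1}(P, Λ^i N^∨ ⊗ P) = 0 for 1 ≤ i ≤ n−1. Then End(P|_C) = k; in particular, since C is an elliptic curve (ω_C ≅ 𝒪_C by adjunction), the restriction P|_C is a simple, hence stable, vector bundle on C. -/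
open CategoryTheory CategoryTheory.Limits

universe u v

/-- A cohomological functor (`δ`-functor) `H^•` from an abelian category `C`
(e.g. coherent sheaves on a smooth projective variety `X`) to `k`-vector spaces:
functorial, with connecting maps `δ` and long exact sequences for every short
exact sequence. In Statement 16 it models `H^n(X, -)`; in Statement 17 it models
`Ext^n(P, -)`. -/
structure DeltaFunctor (k : Type u) [Field k] (C : Type u) [Category.{v} C] [Abelian C] where
  H : ℕ → C → Type u
  [acg : ∀ n X, AddCommGroup (H n X)]
  [mod : ∀ n X, Module k (H n X)]
  map : ∀ (n : ℕ) {X Y : C}, (X ⟶ Y) → (H n X →ₗ[k] H n Y)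
  map_id : ∀ (n : ℕ) (X : C), map n (𝟙 X) = LinearMap.id
  map_comp : ∀ (n : ℕ) {X Y Z : C} (f : X ⟶ Y) (g : Y ⟶ Z),
    map n (f ≫ g) = (map n g).comp (map n f)
  δ : ∀ (n : ℕ) (S : ShortComplex C), S.ShortExact → (H n S.X₃ →ₗ[k] H (n + 1) S.X₁)
  mono_H0 : ∀ (S : ShortComplex C) (hS : S.ShortExact), Function.Injective (map 0 S.f)
  exact₁ : ∀ (n : ℕ) (S : ShortComplex C) (hS : S.ShortExact),
    Function.Exact (map n S.f) (map n S.g)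
  exact₂ : ∀ (n : ℕ) (S : ShortComplex C) (hS : S.ShortExact),
    Function.Exact (map n S.g) (δ n S hS)
  exact₃ : ∀ (n : ℕ) (S : ShortComplex C) (hS : S.ShortExact),
    Function.Exact (δ n S hS) (map (n + 1) S.f)

attribute [instance] DeltaFunctor.acg DeltaFunctor.mod

section Aux

variable {k : Type u} [Field k] {C : Type u} [Category.{v} C] [Abelian C]

/-- A δ-functor kills zero objects. -/
lemma DeltaFunctor.subsingleton_of_isZero (Hc : DeltaFunctor k C) {X : C}
    (hX : IsZero X) (m : ℕ) : Subsingleton (Hc.H m X) := by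
  have hz : (0 : X ⟶ X) = 𝟙 X := hX.eq_of_src _ _
  have hep : Epi (0 : X ⟶ X) := by rw [hz]; infer_instance
  have hS : (ShortComplex.mk (𝟙 X) (0 : X ⟶ X) (by simp)).ShortExact :=
    { exact := ShortComplex.exact_of_isZero_X₂ _ hX, mono_f := inferInstance, epi_g := hep }
  have h := Hc.exact₁ m _ hS
  refine ⟨fun a b => ?_⟩
  have key : ∀ a : Hc.H m X, a = 0 := by
    intro a
    have h0 : Hc.map m (0 : X ⟶ X) a = 0 := (h a).mpr ⟨a, by rw [Hc.map_id]; rfl⟩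
    rwa [hz, Hc.map_id] at h0
  rw [key a, key b]

/-- Dimension-shifting step: if `H^m X₂` and `H^{m+1} X₁` vanish, so does `H^m X₃`. -/
lemma DeltaFunctor.step (Hc : DeltaFunctor k C) (S : ShortComplex C)
    (hS : S.ShortExact) (m : ℕ) (h2 : Subsingleton (Hc.H m S.X₂))
    (h1 : Subsingleton (Hc.H (m + 1) S.X₁)) : Subsingleton (Hc.H m S.X₃) := by
  refine ⟨fun a b => ?_⟩
  have key : ∀ y : Hc.H m S.X₃, y = 0 := by
    intro y
    have hδ : Hc.δ m S hS y = 0 := Subsingleton.elim _ _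
    obtain ⟨x, hx⟩ := (Hc.exact₂ m S hS y).mp hδ
    rw [← hx, Subsingleton.elim x 0, map_zero]
  rw [key a, key b]

/-- In an exact sequence `X ⟶ Y ⟶ Z`, the induced map `X ⟶ ker g` is epi. -/
lemma epi_kernelLift_of_exact {X Y Z : C} (f : X ⟶ Y) (g : Y ⟶ Z) (w : f ≫ g = 0)
    (hex : (ShortComplex.mk f g w).Exact) : Epi (kernel.lift g f w) := by
  haveI h1 : Epi (ShortComplex.mk f g w).toCycles := hex.epi_toCycles
  have h2 : (ShortComplex.mk f g w).toCycles ≫ (ShortComplex.mk f g w).cyclesIsoKernel.hom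
      = kernel.lift g f w := by
    rw [← cancel_mono (kernel.ι g)]
    simp [ShortComplex.cyclesIsoKernel]
  rw [← h2]; exact epi_comp _ _

/-- From an exact sequence `X ⟶ Y ⟶ Z` one gets the short exact sequence
`0 ⟶ ker f ⟶ X ⟶ ker g ⟶ 0`. -/
lemma ses_mk_of_exact {X Y Z : C} (f : X ⟶ Y) (g : Y ⟶ Z) (w : f ≫ g = 0)
    (hex : (ShortComplex.mk f g w).Exact) :
    (ShortComplex.mk (kernel.ι f) (kernel.lift g f w)
      (by rw [← cancel_mono (kernel.ι g)]; simp)).ShortExact := by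
  haveI := epi_kernelLift_of_exact f g w hex
  refine { exact := ?_, mono_f := inferInstance, epi_g := inferInstance }
  apply ShortComplex.exact_of_f_is_kernel
  refine KernelFork.IsLimit.ofι _ _
    (fun {W} t ht => kernel.lift f t ?_) (fun t ht => by simp) (fun t ht m hm => ?_)
  · have h3 : t ≫ kernel.lift g f w ≫ kernel.ι g = 0 := by
      rw [← Category.assoc, ht, zero_comp]
    simpa using h3
  · rw [← cancel_mono (kernel.ι f)]; simpa using hm

end Aux

/-!
STATEMENT 17: Let `X` be a smooth projective variety of dimension `n`, `N` a rank
`n-1` vector bundle with `det(N)⁻¹ ≅ ω_X`, `F ∈ H⁰(X,N)` a regular section with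
smooth zero locus `C` (an elliptic curve, since `ω_C ≅ 𝒪_C` by adjunction), and
`P` a simple vector bundle (`End P = k`) with
`Ext^i(P, ΛⁱN^∨ ⊗ P) = Ext^{i-1}(P, ΛⁱN^∨ ⊗ P) = 0` for `1 ≤ i ≤ n-1`.
Then `End(P|_C) = k`, i.e. `P|_C` is simple (hence, on the elliptic curve `C`, a
stable vector bundle).

Formalization: we work in the abelian category `𝒞` of coherent sheaves on `X`
with a cohomological functor `H^•` modelling `Ext^•(P, -)`; in particular
`H⁰(Y) = Hom(P, Y)`.  The section `F` provides the Koszul resolution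
`0 → Λ^{n-1}N^∨ ⊗ P → ⋯ → N^∨ ⊗ P → P → P|_C → 0`, encoded as the exact complex
`A • → B` with `A i = ΛⁱN^∨ ⊗ P`, `A 0 = P`, `B = P|_C`.  Simplicity of `P` says
`dim_k H⁰(A 0) = dim_k End(P) = 1`; the conclusion is
`dim_k H⁰(B) = dim_k Hom(P, P|_C) = dim_k End(P|_C) = 1`.
-/
theorem stmt17 {k : Type u} [Field k] {C : Type u} [Category.{v} C] [Abelian C]
    (Hc : DeltaFunctor k C) (n : ℕ) (hn : 1 ≤ n)
    (A : ℕ → C) (B : C)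
    (d : ∀ i : ℕ, A (i + 1) ⟶ A i) (aug : A 0 ⟶ B)
    (hzero : ∀ i, n ≤ i → Limits.IsZero (A i))
    (w : ∀ i, d (i + 1) ≫ d i = 0) (w0 : d 0 ≫ aug = 0)
    (hex : ∀ i, (CategoryTheory.ShortComplex.mk (d (i + 1)) (d i) (w i)).Exact)
    (hex0 : (CategoryTheory.ShortComplex.mk (d 0) aug w0).Exact)
    (hepi : CategoryTheory.Epi aug)
    -- the vanishing `Ext^i(P, ΛⁱN^∨ ⊗ P) = Ext^{i-1}(P, ΛⁱN^∨ ⊗ P) = 0`: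
    (hvan : ∀ i, 1 ≤ i → i ≤ n - 1 →
      Subsingleton (Hc.H i (A i)) ∧ Subsingleton (Hc.H (i - 1) (A i)))
    -- `P` is simple: `End(P) = Hom(P, A 0) = H⁰(A 0)` is one-dimensional:
    (hsimple : Module.finrank k (Hc.H 0 (A 0)) = 1) :
    Module.finrank k (Hc.H 0 B) = 1 := by
  -- the short exact sequences `0 → ker d_{i+1} → A_{i+2} → ker d_i → 0`
  have hT : ∀ i, (ShortComplex.mk (kernel.ι (d (i + 1))) (kernel.lift (d i) (d (i + 1)) (w i))
      (by rw [← cancel_mono (kernel.ι (d i))]; simp)).ShortExact :=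
    fun i => ses_mk_of_exact _ _ _ (hex i)
  -- the short exact sequence `0 → ker d_0 → A_1 → ker aug → 0`
  have hT0 : (ShortComplex.mk (kernel.ι (d 0)) (kernel.lift aug (d 0) w0)
      (by rw [← cancel_mono (kernel.ι aug)]; simp)).ShortExact :=
    ses_mk_of_exact _ _ _ hex0
  -- the short exact sequence `0 → ker aug → A_0 → B → 0`
  have hS' : (ShortComplex.mk (kernel.ι aug) aug (kernel.condition aug)).ShortExact :=
    { exact := ShortComplex.exact_of_f_is_kernel _ (kernelIsKernel aug),
      mono_f := inferInstance, epi_g := hepi }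
  -- `ker d_i = 0` when `n ≤ i + 2`
  have hKzero : ∀ i, n ≤ i + 2 → IsZero (kernel (d i)) := by
    intro i hi
    have hz := hzero (i + 2) hi
    have hg : kernel.lift (d i) (d (i + 1)) (w i) = 0 := hz.eq_of_src _ _
    haveI := (hT i).epi_g
    rw [IsZero.iff_id_eq_zero, ← cancel_epi (kernel.lift (d i) (d (i + 1)) (w i))]
    simp [hg]
  -- the main descending induction
  have key : ∀ m i, n ≤ i + 2 + m →
      Subsingleton (Hc.H (i + 1) (kernel (d i))) ∧
      Subsingleton (Hc.H (i + 2) (kernel (d i))) := by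
    intro m
    induction m with
    | zero =>
      intro i hi
      have hz := hKzero i (by omega)
      exact ⟨Hc.subsingleton_of_isZero hz _, Hc.subsingleton_of_isZero hz _⟩
    | succ m ih =>
      intro i hi
      by_cases hc : n ≤ i + 2
      · have hz := hKzero i hc
        exact ⟨Hc.subsingleton_of_isZero hz _, Hc.subsingleton_of_isZero hz _⟩
      · have h1 := ih (i + 1) (by omega)
        have hv := hvan (i + 2) (by omega) (by omega)
        exact ⟨Hc.step _ (hT i) (i + 1) hv.2 h1.1, Hc.step _ (hT i) (i + 2) hv.1 h1.2⟩
  have keyAll : ∀ i, Subsingleton (Hc.H (i + 1) (kernel (d i))) ∧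
      Subsingleton (Hc.H (i + 2) (kernel (d i))) := fun i => key n i (by omega)
  -- vanishing of `H^0` and `H^1` of `ker aug`
  have hker0 : Subsingleton (Hc.H 0 (kernel aug)) ∧ Subsingleton (Hc.H 1 (kernel aug)) := by
    by_cases hc : n = 1
    · have hz1 : IsZero (A 1) := hzero 1 (by omega)
      have hg : kernel.lift aug (d 0) w0 = 0 := hz1.eq_of_src _ _
      haveI := hT0.epi_g
      have hzk : IsZero (kernel aug) := by
        rw [IsZero.iff_id_eq_zero, ← cancel_epi (kernel.lift aug (d 0) w0)]
        simp [hg]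
      exact ⟨Hc.subsingleton_of_isZero hzk _, Hc.subsingleton_of_isZero hzk _⟩
    · have hv := hvan 1 (by omega) (by omega)
      have hK0 := keyAll 0
      exact ⟨Hc.step _ hT0 0 hv.2 hK0.1, Hc.step _ hT0 1 hv.1 hK0.2⟩
  -- `H^0(A 0) → H^0(B)` is bijective
  have hinj : Function.Injective (Hc.map 0 aug) := by
    intro a b hab
    have he := Hc.exact₁ 0 _ hS'
    have h0 : Hc.map 0 aug (a - b) = 0 := by rw [map_sub, hab, sub_self]
    obtain ⟨x, hx⟩ := (he (a - b)).mp h0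
    haveI := hker0.1
    rw [Subsingleton.elim x 0, map_zero] at hx
    exact sub_eq_zero.mp hx.symm
  have hsurj : Function.Surjective (Hc.map 0 aug) := by
    intro y
    have he := Hc.exact₂ 0 _ hS'
    haveI := hker0.2
    exact (he y).mp (Subsingleton.elim _ _)
  have e : Hc.H 0 (A 0) ≃ₗ[k] Hc.H 0 B :=
    LinearEquiv.ofBijective (Hc.map 0 aug) ⟨hinj, hsurj⟩
  rw [← e.finrank_eq]
  exact hsimple
end
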